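/- Let h > 0, let F ∈ L²([−π/h, π/h]), and let f(z) = (1/2π) ∫_{−π/h}^{π/h} F(t) e^{−izt} dt. Let (z_j)_{j≥1} be a sequence of distinct points of ℂ such that for every n the Gram matrix A_n with entries a_{j,k} = sin((π/h)(z_j − z̄_k))/(π(z_j − z̄_k)) (1 ≤ j, k ≤ n) is positive definite, and such that (z_j) is a uniqueness set of W(π/h), i.e. every g ∈ W(π/h) with g(z_j) = 0 for all j ≥ 1 is identically zero. Then the functions f*_{A_n}(z) = Σ_{j=1}^n Σ_{k=1}^n f(z_j) ã_{j,k} K_h(z, z̄_k), where ã_{j,k} are the entries of the conjugate of A_n^{-1} and K_h(z, w̄) = sin((π/h)(z − w̄))/(π(z − w̄)), converge to f in the L²(ℝ) norm as n → ∞. -/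

import Mathlib

open MeasureTheory
open scoped ComplexOrder

/-- The Paley–Wiener transform at band-width `π/h`:
`f(z) = (1/2π) ∫_{−π/h}^{π/h} F(t) e^{−izt} dt`. -/
noncomputable def pwTransformH (h : ℝ) (F : ℝ → ℂ) (z : ℂ) : ℂ :=
  (1 / (2 * Real.pi) : ℝ) •
    ∫ t in Set.Icc (-(Real.pi / h)) (Real.pi / h), F t * Complex.exp (-Complex.I * z * t)

/-- The Paley–Wiener reproducing kernel `K_h(z, w̄) = sin((π/h)(z − w̄))/(π(z − w̄))` as a
function of `u = z − w̄`, with the removable singularity at `u = 0` given its limit value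
`1/h`. -/
noncomputable def sincKernel (h : ℝ) (u : ℂ) : ℂ :=
  if u = 0 then (1 / h : ℝ) else Complex.sin ((Real.pi / h : ℝ) * u) / ((Real.pi : ℂ) * u)

namespace Aveiro

open Complex Set Filter
open scoped ENNReal NNReal

local notation "⟪" x ", " y "⟫" => @inner ℂ _ _ x y

noncomputable def mu (h : ℝ) : Measure ℝ :=
  volume.restrict (Set.Icc (-(Real.pi / h)) (Real.pi / h))

instance (h : ℝ) : IsFiniteMeasure (mu h) :=
  ⟨by rw [mu, Measure.restrict_apply_univ]; exact measure_Icc_lt_top⟩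

noncomputable def E (h : ℝ) (w : ℂ) : ℝ → ℂ := fun t =>
  (1 / (2 * Real.pi) : ℝ) • Complex.exp (Complex.I * (starRingEnd ℂ) w * t)

lemma contE (h : ℝ) (w : ℂ) : Continuous (E h w) := by
  unfold E; fun_prop

lemma memE (h : ℝ) (w : ℂ) : MemLp (E h w) 2 (mu h) := by
  obtain ⟨C, hC⟩ := (isCompact_Icc (a := -(Real.pi / h)) (b := Real.pi / h)).exists_bound_of_continuousOn
    (contE h w).continuousOn
  have : MemLp (E h w) ⊤ (mu h) := by
    refine memLp_top_of_bound (contE h w).aestronglyMeasurable C ?_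
    exact (ae_restrict_mem measurableSet_Icc).mono fun t ht => hC t ht
  exact this.mono_exponent le_top

noncomputable def eH (h : ℝ) (w : ℂ) : Lp ℂ 2 (mu h) := (memE h w).toLp _

lemma inner_eH_toLp (h : ℝ) (G : ℝ → ℂ) (hG : MemLp G 2 (mu h)) (w : ℂ) :
    ⟪eH h w, hG.toLp G⟫ = pwTransformH h G w := by
  rw [MeasureTheory.L2.inner_def]
  have h1 : ∀ᵐ t ∂(mu h), (eH h w : ℝ → ℂ) t = E h w t := (memE h w).coeFn_toLp
  have h2 : ∀ᵐ t ∂(mu h), (hG.toLp G : ℝ → ℂ) t = G t := hG.coeFn_toLp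
  have : ∫ t, ⟪(eH h w : ℝ → ℂ) t, (hG.toLp G : ℝ → ℂ) t⟫ ∂(mu h)
      = ∫ t, ⟪E h w t, G t⟫ ∂(mu h) := by
    refine integral_congr_ae ?_
    filter_upwards [h1, h2] with t e1 e2
    rw [e1, e2]
  rw [this, pwTransformH]
  rw [← integral_smul]
  refine integral_congr_ae (Filter.Eventually.of_forall fun t => ?_)
  simp only [RCLike.inner_apply, E]
  rw [starRingEnd_apply, star_smul, star_trivial]
  rw [← starRingEnd_apply, ← Complex.exp_conj]
  simp only [map_mul, Complex.conj_I, Complex.conj_conj, Complex.conj_ofReal]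
  rw [mul_smul_comm]

open Complex Set

lemma integral_exp_mu {h : ℝ} (hh : 0 < h) (d : ℂ) :
    (∫ t, Complex.exp (-Complex.I * d * t) ∂(mu h)) = 2 * (Real.pi : ℂ) * sincKernel h d := by
  have ha : (0:ℝ) < Real.pi / h := div_pos Real.pi_pos hh
  have hle : -(Real.pi / h) ≤ Real.pi / h := by linarith
  have : (mu h) = volume.restrict (Set.Ioc (-(Real.pi / h)) (Real.pi / h)) := by
    rw [mu, Measure.restrict_congr_set Ioc_ae_eq_Icc]
  rw [this]
  have : (∫ t in Set.Ioc (-(Real.pi / h)) (Real.pi / h), Complex.exp (-Complex.I * d * t))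
      = ∫ t in (-(Real.pi / h))..(Real.pi / h), Complex.exp (-Complex.I * d * t) := by
    rw [intervalIntegral.integral_of_le hle]
  rw [this]
  by_cases hd : d = 0
  · subst hd
    simp only [sincKernel, if_pos rfl, mul_zero, zero_mul, neg_zero,
      Complex.exp_zero, intervalIntegral.integral_const, sub_neg_eq_add, Complex.real_smul, mul_one]
    push_cast
    ring
  · have hc : -Complex.I * d ≠ 0 := by simp [Complex.I_ne_zero, hd]
    have key := integral_exp_mul_complex hc (a := -(Real.pi / h)) (b := Real.pi / h)
    rw [key, sincKernel, if_neg hd]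
    set p : ℂ := ((Real.pi / h : ℝ) : ℂ) * d with hp
    have hnum : Complex.exp (-Complex.I * d * ((Real.pi/h : ℝ):ℂ))
        - Complex.exp (-Complex.I * d * ((-(Real.pi/h) : ℝ):ℂ))
        = -2 * Complex.I * Complex.sin p := by
      have h2s := Complex.two_sin (x := p)
      have e1 : -Complex.I * d * ((Real.pi/h : ℝ):ℂ) = -p * Complex.I := by
        rw [hp]; push_cast; ring
      have e2 : -Complex.I * d * ((-(Real.pi/h) : ℝ):ℂ) = p * Complex.I := by
        rw [hp]; push_cast; ring
      rw [e1, e2]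
      linear_combination Complex.I * h2s
        + (Complex.exp (-p * Complex.I) - Complex.exp (p * Complex.I)) * Complex.I_sq
    push_cast at hnum ⊢
    rw [hnum]
    have hI := Complex.I_ne_zero
    have hpine : (Real.pi : ℂ) ≠ 0 := by simpa using Real.pi_ne_zero
    field_simp

lemma gram {h : ℝ} (hh : 0 < h) (v w : ℂ) :
    ⟪eH h v, eH h w⟫ = ((1/(2*Real.pi) : ℝ) : ℂ) * sincKernel h (v - (starRingEnd ℂ) w) := by
  have key := inner_eH_toLp h (E h w) (memE h w) v
  rw [show (memE h w).toLp (E h w) = eH h w from rfl] at key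
  rw [key, pwTransformH]
  have e1 : ∀ t : ℝ, E h w t * Complex.exp (-Complex.I * v * t)
      = (1/(2*Real.pi) : ℝ) • Complex.exp (-Complex.I * (v - (starRingEnd ℂ) w) * t) := by
    intro t
    rw [E, smul_mul_assoc, ← Complex.exp_add]
    congr 2
    ring
  simp_rw [e1]
  rw [show (volume.restrict (Icc (-(Real.pi / h)) (Real.pi / h))) = mu h from rfl]
  rw [integral_smul, integral_exp_mu hh, Complex.real_smul, Complex.real_smul]
  have hpine : (Real.pi : ℂ) ≠ 0 := by simpa using Real.pi_ne_zero
  push_cast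
  field_simp

lemma inner_eH_Lp {h : ℝ} (u : Lp ℂ 2 (mu h)) (w : ℂ) :
    ⟪eH h w, u⟫ = pwTransformH h u w := by
  have := inner_eH_toLp h u (Lp.memLp u) w
  rwa [Lp.toLp_coeFn u (Lp.memLp u)] at this

lemma conjE_norm {h : ℝ} (x t : ℝ) : ‖E h x t‖ = 1 / (2 * Real.pi) := by
  rw [E, norm_smul]
  have : Complex.I * (starRingEnd ℂ) (x:ℂ) * t = ((x * t : ℝ):ℂ) * Complex.I := by
    rw [Complex.conj_ofReal]; push_cast; ring
  rw [this, Complex.norm_exp]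
  simp [Real.pi_pos.le, abs_of_nonneg, Real.pi_nonneg]

lemma continuous_phi {h : ℝ} (u : Lp ℂ 2 (mu h)) :
    Continuous fun x : ℝ => ⟪eH h (x:ℂ), u⟫ := by
  have hrep : ∀ x : ℝ, ⟪eH h (x:ℂ), u⟫ = ∫ t, (starRingEnd ℂ) (E h (x:ℂ) t) * u t ∂(mu h) := by
    intro x
    rw [MeasureTheory.L2.inner_def]
    refine integral_congr_ae ?_
    filter_upwards [(memE h (x:ℂ)).coeFn_toLp] with t ht
    rw [RCLike.inner_apply, show (eH h (x:ℂ) : ℝ → ℂ) t = E h (x:ℂ) t from ht, mul_comm]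
  simp only [hrep]
  have hu1 : Integrable (fun t => u t) (mu h) :=
    memLp_one_iff_integrable.mp ((Lp.memLp u).mono_exponent (by norm_num))
  refine continuous_of_dominated ?_ ?_ (hu1.norm.const_mul (1 / (2 * Real.pi))) ?_
  · intro x
    exact (Complex.continuous_conj.comp (contE h (x:ℂ))).aestronglyMeasurable.mul
      (Lp.aestronglyMeasurable u)
  · intro x
    refine Filter.Eventually.of_forall fun t => ?_
    rw [norm_mul, RCLike.norm_conj, conjE_norm]
  · refine Filter.Eventually.of_forall fun t => ?_
    have : Continuous fun x : ℝ => E h (x:ℂ) t := by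
      unfold E
      refine Continuous.smul (f := fun _ : ℝ => (1 / (2 * Real.pi) : ℝ)) (g := fun x : ℝ => Complex.exp (Complex.I * (starRingEnd ℂ) (x:ℂ) * t)) continuous_const (Complex.continuous_exp.comp (f := fun x : ℝ => Complex.I * (starRingEnd ℂ) (x:ℂ) * t) ?_)
      simp_rw [Complex.conj_ofReal]
      fun_prop
    exact ((Complex.continuous_conj.comp this)).mul continuous_const

lemma orthonormal_translates {h : ℝ} (hh : 0 < h) (v : ℝ) :
    Orthonormal ℂ (fun m : ℤ =>
      (Real.sqrt (2 * Real.pi * h) : ℂ) • eH h ((v + m * h : ℝ) : ℂ)) := by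
  rw [orthonormal_iff_ite]
  intro m m'
  rw [inner_smul_left, inner_smul_right, gram hh, Complex.conj_ofReal]
  have harg : ((v + m * h : ℝ) : ℂ) - (starRingEnd ℂ) ((v + m' * h : ℝ) : ℂ)
      = (((m - m' : ℤ) * h : ℝ) : ℂ) := by
    rw [Complex.conj_ofReal]; push_cast; ring
  rw [harg]
  by_cases hmm : m = m'
  · subst hmm
    rw [if_pos rfl]
    have h0 : (((m - m : ℤ) * h : ℝ) : ℂ) = 0 := by push_cast; ring
    rw [h0, sincKernel, if_pos rfl]
    rw [← mul_assoc, ← Complex.ofReal_mul,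
      Real.mul_self_sqrt (by positivity)]
    push_cast
    field_simp
  · rw [if_neg hmm]
    have hz : (((m - m' : ℤ) * h : ℝ) : ℂ) ≠ 0 := by
      rw [Complex.ofReal_ne_zero]
      exact mul_ne_zero (Int.cast_ne_zero.mpr (sub_ne_zero.mpr hmm)) (ne_of_gt hh)
    rw [sincKernel, if_neg hz]
    have harg2 : ((Real.pi / h : ℝ) : ℂ) * (((m - m' : ℤ) * h : ℝ) : ℂ)
        = ((m - m' : ℤ) : ℂ) * (Real.pi : ℂ) := by
      have : (h:ℂ) ≠ 0 := by exact_mod_cast ne_of_gt hh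
      push_cast
      field_simp
    rw [harg2, Complex.sin_int_mul_pi]
    simp

lemma finset_bessel {h : ℝ} (hh : 0 < h) (u : Lp ℂ 2 (mu h)) (v : ℝ) (s : Finset ℤ) :
    ∑ m ∈ s, ‖⟪eH h ((v + m * h : ℝ) : ℂ), u⟫‖ ^ 2 ≤ ‖u‖ ^ 2 / (2 * Real.pi * h) := by
  have hb := (orthonormal_translates hh v).sum_inner_products_le (s := s) u
  have hc : (0:ℝ) < 2 * Real.pi * h := by positivity
  simp only [inner_smul_left, norm_mul, mul_pow, RCLike.norm_conj] at hb
  have hn : ‖((Real.sqrt (2 * Real.pi * h) : ℝ) : ℂ)‖ ^ 2 = 2 * Real.pi * h := by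
    rw [Complex.norm_real, Real.norm_eq_abs, _root_.abs_of_nonneg (Real.sqrt_nonneg _), Real.sq_sqrt hc.le]
  rw [le_div_iff₀ hc, mul_comm]
  calc 2 * Real.pi * h * ∑ m ∈ s, ‖⟪eH h ((v + m * h : ℝ) : ℂ), u⟫‖ ^ 2
      = ∑ m ∈ s, ‖((Real.sqrt (2 * Real.pi * h) : ℝ) : ℂ)‖ ^ 2
          * ‖⟪eH h ((v + m * h : ℝ) : ℂ), u⟫‖ ^ 2 := by
        rw [← Finset.mul_sum, hn]
    _ ≤ ‖u‖ ^ 2 := hb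

lemma lintegral_bessel {h : ℝ} (hh : 0 < h) (u : Lp ℂ 2 (mu h)) :
    (∫⁻ x : ℝ, (‖⟪eH h (x:ℂ), u⟫‖₊ : ℝ≥0∞) ^ (2:ℕ))
      ≤ ENNReal.ofReal (‖u‖ ^ 2 / (2 * Real.pi)) := by
  set φ : ℝ → ℂ := fun x => ⟪eH h (x:ℂ), u⟫ with hφdef
  have hφ : Continuous φ := continuous_phi u
  have hg : Measurable fun x : ℝ => (‖φ x‖₊ : ℝ≥0∞) ^ (2:ℕ) :=
    (hφ.measurable.nnnorm.coe_nnreal_ennreal).pow_const 2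
  have hU : (⋃ m : ℤ, Set.Ioc ((m:ℝ) * h) ((m:ℝ) * h + h)) = Set.univ := by
    ext x
    simp only [Set.mem_iUnion, Set.mem_univ, iff_true, Set.mem_Ioc]
    refine ⟨⌈x / h⌉ - 1, ?_, ?_⟩
    · push_cast
      rw [← lt_div_iff₀ hh]
      linarith [Int.ceil_lt_add_one (x / h)]
    · push_cast
      have h1 : x / h ≤ (⌈x / h⌉ : ℝ) := Int.le_ceil _
      have := (div_le_iff₀ hh).mp h1
      linarith
  have hdisj : Pairwise (Function.onFun Disjoint
      fun m : ℤ => Set.Ioc ((m:ℝ) * h) ((m:ℝ) * h + h)) := by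
    intro m m' hne
    rw [Function.onFun, Set.disjoint_left]
    rintro x ⟨hx1, hx2⟩ ⟨hy1, hy2⟩
    rcases hne.lt_or_gt with hlt | hlt
    · have : ((m:ℝ) + 1) ≤ (m':ℝ) := by exact_mod_cast hlt
      nlinarith
    · have : ((m':ℝ) + 1) ≤ (m:ℝ) := by exact_mod_cast hlt
      nlinarith
  have htrans : ∀ m : ℤ, (∫⁻ x in Set.Ioc ((m:ℝ) * h) ((m:ℝ) * h + h),
      (‖φ x‖₊ : ℝ≥0∞) ^ (2:ℕ))
      = ∫⁻ v in Set.Ioc (0:ℝ) h, (‖φ (v + m * h)‖₊ : ℝ≥0∞) ^ (2:ℕ) := by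
    intro m
    have hmp : MeasurePreserving (fun v : ℝ => v + (m:ℝ) * h) volume volume :=
      measurePreserving_add_right volume ((m:ℝ) * h)
    have hemb : MeasurableEmbedding (fun v : ℝ => v + (m:ℝ) * h) :=
      (MeasurableEquiv.addRight ((m:ℝ) * h)).measurableEmbedding
    have hpre : (fun v : ℝ => v + (m:ℝ) * h) ⁻¹' Set.Ioc ((m:ℝ) * h) ((m:ℝ) * h + h)
        = Set.Ioc (0:ℝ) h := by
      ext v
      simp only [Set.mem_preimage, Set.mem_Ioc]
      constructor <;> intro hv <;> constructor <;> linarith [hv.1, hv.2]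
    rw [← hpre]
    exact (hmp.setLIntegral_comp_preimage_emb hemb
      (fun x => (‖φ x‖₊ : ℝ≥0∞) ^ (2:ℕ)) _).symm
  have hpoint : ∀ v : ℝ, (∑' m : ℤ, (‖φ (v + m * h)‖₊ : ℝ≥0∞) ^ (2:ℕ))
      ≤ ENNReal.ofReal (‖u‖ ^ 2 / (2 * Real.pi * h)) := by
    intro v
    rw [ENNReal.tsum_eq_iSup_sum]
    refine iSup_le fun s => ?_
    have heq : (∑ m ∈ s, (‖φ (v + m * h)‖₊ : ℝ≥0∞) ^ (2:ℕ))
        = ENNReal.ofReal (∑ m ∈ s, ‖φ (v + m * h)‖ ^ 2) := by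
      rw [ENNReal.ofReal_sum_of_nonneg (fun _ _ => by positivity)]
      refine Finset.sum_congr rfl fun m _ => ?_
      rw [ENNReal.ofReal_pow (norm_nonneg _), ofReal_norm, enorm_eq_nnnorm]
    rw [heq]
    exact ENNReal.ofReal_le_ofReal (finset_bessel hh u v s)
  calc (∫⁻ x : ℝ, (‖φ x‖₊ : ℝ≥0∞) ^ (2:ℕ))
      = ∫⁻ x in ⋃ m : ℤ, Set.Ioc ((m:ℝ) * h) ((m:ℝ) * h + h),
          (‖φ x‖₊ : ℝ≥0∞) ^ (2:ℕ) := by rw [hU, Measure.restrict_univ]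
    _ = ∑' m : ℤ, ∫⁻ x in Set.Ioc ((m:ℝ) * h) ((m:ℝ) * h + h),
          (‖φ x‖₊ : ℝ≥0∞) ^ (2:ℕ) := lintegral_iUnion (fun _ => measurableSet_Ioc) hdisj _
    _ = ∑' m : ℤ, ∫⁻ v in Set.Ioc (0:ℝ) h, (‖φ (v + m * h)‖₊ : ℝ≥0∞) ^ (2:ℕ) := by
          exact tsum_congr htrans
    _ = ∫⁻ v in Set.Ioc (0:ℝ) h, ∑' m : ℤ, (‖φ (v + m * h)‖₊ : ℝ≥0∞) ^ (2:ℕ) := by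
          refine (lintegral_tsum fun m => ?_).symm
          exact ((hg.comp (measurable_add_const ((m:ℝ) * h)))).aemeasurable
    _ ≤ ∫⁻ _ in Set.Ioc (0:ℝ) h, ENNReal.ofReal (‖u‖ ^ 2 / (2 * Real.pi * h)) :=
          lintegral_mono fun v => hpoint v
    _ = ENNReal.ofReal (‖u‖ ^ 2 / (2 * Real.pi * h)) * ENNReal.ofReal h := by
          rw [setLIntegral_const, Real.volume_Ioc, sub_zero]
    _ = ENNReal.ofReal (‖u‖ ^ 2 / (2 * Real.pi)) := by
          rw [← ENNReal.ofReal_mul (by positivity)]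
          congr 1
          field_simp

lemma eLpNorm_phi_le {h : ℝ} (hh : 0 < h) (u : Lp ℂ 2 (mu h)) :
    eLpNorm (fun x : ℝ => ⟪eH h (x:ℂ), u⟫) 2 volume ≤ ENNReal.ofReal ‖u‖ := by
  rw [eLpNorm_eq_lintegral_rpow_enorm_toReal (by norm_num) (by norm_num)]
  have h2 : ((2:ℝ≥0∞)).toReal = ((2:ℕ):ℝ) := by norm_num
  simp only [h2, ENNReal.rpow_natCast, enorm_eq_nnnorm]
  have hb := lintegral_bessel hh u
  have hb2 : (∫⁻ x : ℝ, (‖⟪eH h (x:ℂ), u⟫‖₊ : ℝ≥0∞) ^ (2:ℕ))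
      ≤ ENNReal.ofReal (‖u‖ ^ 2) := by
    refine hb.trans (ENNReal.ofReal_le_ofReal ?_)
    have h1 : (1:ℝ) ≤ 2 * Real.pi := by nlinarith [Real.pi_gt_three]
    exact div_le_self (by positivity) h1
  calc (∫⁻ x : ℝ, (‖⟪eH h (x:ℂ), u⟫‖₊ : ℝ≥0∞) ^ (2:ℕ)) ^ (1 / ((2:ℕ):ℝ))
      ≤ (ENNReal.ofReal (‖u‖ ^ 2)) ^ (1 / ((2:ℕ):ℝ)) := by
        exact ENNReal.rpow_le_rpow hb2 (by norm_num)
    _ = ENNReal.ofReal ‖u‖ := by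
        rw [ENNReal.ofReal_pow (norm_nonneg _), ← ENNReal.rpow_natCast, ← ENNReal.rpow_mul]
        norm_num

lemma inj {h : ℝ} (hh : 0 < h) (u : Lp ℂ 2 (mu h))
    (hzero : ∀ w : ℂ, pwTransformH h (⇑u) w = 0) : u = 0 := by
  set a : ℝ := Real.pi / h with ha
  set T : ℝ := 2 * a with hTdef
  have hT0 : 0 < T := by rw [hTdef, ha]; positivity
  haveI hTfact : Fact (0 < T) := ⟨hT0⟩
  set u' : ℝ → ℂ := ⇑u with hu'
  have su' : StronglyMeasurable u' := Lp.stronglyMeasurable u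
  set g : AddCircle T → ℂ := AddCircle.liftIoc T (-a) u' with hg
  have hT' : -a + T = a := by rw [hTdef]; ring
  have hIocIcc : volume.restrict (Set.Ioc (-a) a) = mu h :=
    Measure.restrict_congr_set Ioc_ae_eq_Icc
  have hagree : ∀ x ∈ Set.Ioc (-a) (-a + T), g ↑x = u' x := fun x hx =>
    AddCircle.liftIoc_coe_apply hx
  have hgsm : StronglyMeasurable g := by
    have : g = fun y => u' (((AddCircle.equivIoc T (-a)) y : ℝ)) := rfl
    rw [this]
    exact su'.comp_measurable
      (measurable_subtype_coe.comp (AddCircle.measurableEquivIoc T (-a)).measurable)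
  have hcomp_ae : (fun x : ℝ => g ↑x) =ᵐ[volume.restrict (Set.Ioc (-a) (-a + T))] u' := by
    filter_upwards [ae_restrict_mem measurableSet_Ioc] with x hx
    exact hagree x hx
  have hmem_vol : MemLp g 2 (volume : Measure (AddCircle T)) := by
    rw [← (AddCircle.measurePreserving_mk T (-a)).map_eq]
    refine (memLp_map_measure_iff hgsm.aestronglyMeasurable
      AddCircle.measurable_mk'.aemeasurable).mpr ?_
    have hm : MemLp u' 2 (volume.restrict (Set.Ioc (-a) (-a + T))) := by
      rw [hT', hIocIcc]
      exact Lp.memLp u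
    exact hm.ae_eq hcomp_ae.symm
  have hvol : (volume : Measure (AddCircle T))
      = (ENNReal.ofReal T) • (AddCircle.haarAddCircle : Measure (AddCircle T)) :=
    AddCircle.volume_eq_smul_haarAddCircle
  have hhaarvol : (AddCircle.haarAddCircle : Measure (AddCircle T))
      = (ENNReal.ofReal T)⁻¹ • (volume : Measure (AddCircle T)) := by
    rw [hvol, smul_smul, ENNReal.inv_mul_cancel
      (ne_of_gt (ENNReal.ofReal_pos.mpr hT0)) ENNReal.ofReal_ne_top, one_smul]
  have hhaar : MemLp g 2 (AddCircle.haarAddCircle : Measure (AddCircle T)) := by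
    rw [hhaarvol]
    exact hmem_vol.smul_measure (by simp [hT0])
  -- all Fourier coefficients vanish
  have hcoeff : ∀ n : ℤ, fourierCoeff g n = 0 := by
    intro n
    have I0 : (∫ t, u' t * Complex.exp (-Complex.I * ((n * h : ℝ) : ℂ) * t) ∂(mu h)) = 0 := by
      have := hzero ((n * h : ℝ) : ℂ)
      rw [pwTransformH] at this
      rcases smul_eq_zero.mp this with hc | hc
      · exact absurd hc (by positivity)
      · exact hc
    have key : (∫ x in Set.Ioc (-a) (-a + T), (fourier (-n) (x : AddCircle T) : ℂ) • u' x) = 0 := by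
      rw [hT', hIocIcc, ← I0]
      refine integral_congr_ae (Filter.Eventually.of_forall fun t => ?_)
      simp only [fourier_coe_apply, smul_eq_mul]
      rw [mul_comm]
      congr 2
      have hhne : (h:ℂ) ≠ 0 := by exact_mod_cast ne_of_gt hh
      have hpine : (Real.pi : ℂ) ≠ 0 := by simpa using Real.pi_ne_zero
      rw [hTdef, ha]
      push_cast
      field_simp
    have : fourierCoeff g n
        = (ENNReal.ofReal T).toReal⁻¹ • ∫ t, fourier (-n) t • g t ∂(volume : Measure (AddCircle T)) := by
      rw [fourierCoeff, hhaarvol, integral_smul_measure]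
      simp
    rw [this, ← AddCircle.integral_preimage T (-a) (fun t => fourier (-n) t • g t)]
    have : (∫ x in Set.Ioc (-a) (-a + T), fourier (-n) (x : AddCircle T) • g ↑x) = 0 := by
      rw [← key]
      refine integral_congr_ae ?_
      filter_upwards [ae_restrict_mem measurableSet_Ioc] with x hx
      rw [hagree x hx]
    rw [this, smul_zero]
  -- conclude g = 0 a.e.
  have hgL : hhaar.toLp g = 0 := by
    have hrepr0 : fourierBasis.repr (hhaar.toLp g) = 0 := by
      ext i
      rw [fourierBasis_repr]
      have : fourierCoeff (↑(hhaar.toLp g) : AddCircle T → ℂ) i = fourierCoeff g i := by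
        refine integral_congr_ae ?_
        filter_upwards [hhaar.coeFn_toLp] with t ht
        rw [ht]
      rw [this, hcoeff]
      rfl
    have := fourierBasis.repr.map_eq_zero_iff.mp hrepr0
    exact this
  have hae : g =ᵐ[(AddCircle.haarAddCircle : Measure (AddCircle T))] 0 := by
    have h1 := hhaar.coeFn_toLp
    rw [hgL] at h1
    exact h1.symm.trans (Lp.coeFn_zero ℂ 2 _)
  have haevol : g =ᵐ[(volume : Measure (AddCircle T))] 0 := by
    rw [hvol]
    exact Measure.ae_smul_measure hae _
  have hmapped : g =ᵐ[Measure.map ((↑) : ℝ → AddCircle T)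
      (volume.restrict (Set.Ioc (-a) (-a + T)))] (0 : AddCircle T → ℂ) := by
    rw [(AddCircle.measurePreserving_mk T (-a)).map_eq]
    exact haevol
  have hcomp0 : (fun x : ℝ => g ↑x) =ᵐ[volume.restrict (Set.Ioc (-a) (-a + T))] 0 := by
    have h2 := ae_eq_comp (AddCircle.measurable_mk'.aemeasurable) hmapped
    exact h2
  have hres : volume.restrict (Set.Ioc (-a) (-a + T)) = mu h := by
    rw [hT']
    exact hIocIcc
  have hu0 : u' =ᵐ[mu h] 0 := by
    have := hcomp_ae.symm.trans hcomp0
    rwa [hres] at this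
  exact Lp.eq_zero_iff_ae_eq_zero.mpr hu0

end Aveiro

open Aveiro Filter

local notation "⟪" x ", " y "⟫" => @inner ℂ _ _ x y

/-- **Aveiro approximation in the Paley–Wiener space `W(π/h)` over a uniqueness set
(Theorem 3.2).** Let `h > 0`, `F ∈ L²([−π/h, π/h])`, and `f = pwTransformH h F ∈ W(π/h)`.
Let `(z j)` be distinct points of `ℂ` whose Gram matrices `A n` (entries
`K_h(z j, conj (z k))`) are positive definite and which form a uniqueness set of `W(π/h)`.
Then the Aveiro approximations
`f*_{A n}(x) = ∑_{j,k} f (z j) ã_{j,k} K_h(x, conj (z k))` converge to `f` in `L²(ℝ)`. -/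
theorem stmt16 (h : ℝ) (hh : 0 < h) (F : ℝ → ℂ)
    (hF : MemLp F 2 (volume.restrict (Set.Icc (-(Real.pi / h)) (Real.pi / h))))
    (z : ℕ → ℂ) (hinj : Function.Injective z)
    (A : (n : ℕ) → Matrix (Fin n) (Fin n) ℂ)
    (hA : ∀ n (j k : Fin n), A n j k = sincKernel h (z j - (starRingEnd ℂ) (z k)))
    (hpos : ∀ n, (A n).PosDef)
    (huniq : ∀ G : ℝ → ℂ,
      MemLp G 2 (volume.restrict (Set.Icc (-(Real.pi / h)) (Real.pi / h))) →
      (∀ j, pwTransformH h G (z j) = 0) → ∀ w : ℂ, pwTransformH h G w = 0) :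
    Filter.Tendsto
      (fun n : ℕ => eLpNorm (fun x : ℝ =>
        pwTransformH h F x - ∑ j : Fin n, ∑ k : Fin n,
          pwTransformH h F (z j) * (starRingEnd ℂ) ((A n)⁻¹ j k) *
            sincKernel h ((x : ℂ) - (starRingEnd ℂ) (z k))) 2 volume)
      Filter.atTop (nhds 0) := by
  have hF' : MemLp F 2 (mu h) := hF
  set FH : Lp ℂ 2 (mu h) := hF'.toLp F with hFH
  have hpw : ∀ w : ℂ, pwTransformH h F w = ⟪eH h w, FH⟫ := fun w =>
    (inner_eH_toLp h F hF' w).symm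
  set b : ℕ → ℂ := fun j => pwTransformH h F (z j) with hbdef
  set d : (n : ℕ) → Fin n → ℂ := fun n k =>
    ((2 * Real.pi : ℝ) : ℂ) * ∑ j : Fin n, b j * (starRingEnd ℂ) ((A n)⁻¹ j k) with hddef
  set q : ℕ → Lp ℂ 2 (mu h) := fun n => ∑ k : Fin n, d n k • eH h (z k) with hqdef
  have hpi : ((2 * Real.pi : ℝ) : ℂ) * ((1 / (2 * Real.pi) : ℝ) : ℂ) = 1 := by
    push_cast
    have : (Real.pi : ℂ) ≠ 0 := by simpa using Real.pi_ne_zero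
    field_simp
  -- inner products with q n
  have hq_inner : ∀ n (w : ℂ), ⟪eH h w, q n⟫
      = ∑ k : Fin n, ∑ j : Fin n, b j * (starRingEnd ℂ) ((A n)⁻¹ j k)
          * sincKernel h (w - (starRingEnd ℂ) (z k)) := by
    intro n w
    rw [hqdef]
    rw [inner_sum]
    refine Finset.sum_congr rfl fun k _ => ?_
    rw [inner_smul_right, gram hh]
    rw [show d n k = ((2 * Real.pi : ℝ) : ℂ)
      * ∑ j : Fin n, b j * (starRingEnd ℂ) ((A n)⁻¹ j k) from rfl]
    rw [mul_mul_mul_comm, hpi, one_mul, Finset.sum_mul]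
  -- the approximant equals inner with q n
  have happrox : ∀ n (x : ℝ),
      (∑ j : Fin n, ∑ k : Fin n, pwTransformH h F (z j) * (starRingEnd ℂ) ((A n)⁻¹ j k) *
        sincKernel h ((x : ℂ) - (starRingEnd ℂ) (z k))) = ⟪eH h (x:ℂ), q n⟫ := by
    intro n x
    rw [hq_inner n (x:ℂ), Finset.sum_comm]
  -- orthogonality
  have horth : ∀ n (m : Fin n), ⟪eH h (z m), FH - q n⟫ = 0 := by
    intro n m
    rw [inner_sub_right, hq_inner n (z m)]
    have hAinv : ∀ j k : Fin n, (starRingEnd ℂ) ((A n)⁻¹ j k) = (A n)⁻¹ k j := by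
      intro j k
      have hherm : Matrix.conjTranspose ((A n)⁻¹) = (A n)⁻¹ := (hpos n).isHermitian.inv
      calc (starRingEnd ℂ) ((A n)⁻¹ j k) = Matrix.conjTranspose ((A n)⁻¹) k j := by
            rw [Matrix.conjTranspose_apply]
            rfl
        _ = (A n)⁻¹ k j := by rw [hherm]
    have hmul : A n * (A n)⁻¹ = 1 :=
      Matrix.mul_nonsing_inv _ ((Matrix.isUnit_iff_isUnit_det _).mp (hpos n).isUnit)
    have : (∑ k : Fin n, ∑ j : Fin n, b j * (starRingEnd ℂ) ((A n)⁻¹ j k)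
        * sincKernel h (z m - (starRingEnd ℂ) (z k))) = b m := by
      calc (∑ k : Fin n, ∑ j : Fin n, b j * (starRingEnd ℂ) ((A n)⁻¹ j k)
          * sincKernel h (z m - (starRingEnd ℂ) (z k)))
          = ∑ j : Fin n, b j * ∑ k : Fin n, A n m k * (A n)⁻¹ k j := by
            rw [Finset.sum_comm]
            refine Finset.sum_congr rfl fun j _ => ?_
            rw [Finset.mul_sum]
            refine Finset.sum_congr rfl fun k _ => ?_
            rw [hAinv, ← hA n m k]
            ring
        _ = ∑ j : Fin n, b j * (1 : Matrix (Fin n) (Fin n) ℂ) m j := by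
            refine Finset.sum_congr rfl fun j _ => ?_
            rw [← Matrix.mul_apply, hmul]
        _ = b m := by
            simp [Matrix.one_apply]
    rw [this]
    have hbm : b (↑m : ℕ) = ⟪eH h (z ↑m), FH⟫ := hpw (z ↑m)
    rw [hbm, sub_self]
  -- best approximation property
  have hspan_orth : ∀ n (w : Lp ℂ 2 (mu h)),
      w ∈ Submodule.span ℂ (Set.range (fun k : Fin n => eH h (z k))) →
      ⟪w, FH - q n⟫ = 0 := by
    intro n w hw
    induction hw using Submodule.span_induction with
    | mem x hx =>
      obtain ⟨k, rfl⟩ := hx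
      exact horth n k
    | zero => simp
    | add x y _ _ hx hy => rw [inner_add_left, hx, hy, add_zero]
    | smul c x _ hx => rw [inner_smul_left, hx, mul_zero]
  have hbest : ∀ n (v : Lp ℂ 2 (mu h)),
      v ∈ Submodule.span ℂ (Set.range (fun k : Fin n => eH h (z k))) →
      ‖FH - q n‖ ≤ ‖FH - v‖ := by
    intro n v hv
    have hqmem : q n ∈ Submodule.span ℂ (Set.range (fun k : Fin n => eH h (z k))) := by
      rw [hqdef]
      exact Submodule.sum_mem _ fun k _ =>
        Submodule.smul_mem _ _ (Submodule.subset_span ⟨k, rfl⟩)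
    have hdiff : q n - v ∈ Submodule.span ℂ (Set.range (fun k : Fin n => eH h (z k))) :=
      Submodule.sub_mem _ hqmem hv
    have hperp : ⟪FH - q n, q n - v⟫ = 0 :=
      inner_eq_zero_symm.mp (hspan_orth n _ hdiff)
    have hdecomp : FH - v = (FH - q n) + (q n - v) := by abel
    have hsq := norm_add_sq_eq_norm_sq_add_norm_sq_of_inner_eq_zero (FH - q n) (q n - v) hperp
    rw [← hdecomp] at hsq
    nlinarith [norm_nonneg (FH - v), norm_nonneg (FH - q n), norm_nonneg (q n - v), hsq]
  -- density
  have hdense : (Submodule.span ℂ (Set.range (fun j : ℕ => eH h (z j)))).topologicalClosure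
      = ⊤ := by
    have hbot : (Submodule.span ℂ (Set.range (fun j : ℕ => eH h (z j))))ᗮ = ⊥ := by
      rw [Submodule.eq_bot_iff]
      intro u hu
      have hgen : ∀ j : ℕ, ⟪eH h (z j), u⟫ = 0 := fun j =>
        (Submodule.mem_orthogonal _ u).mp hu _ (Submodule.subset_span ⟨j, rfl⟩)
      have hz : ∀ j : ℕ, pwTransformH h (⇑u) (z j) = 0 := fun j => by
        rw [← inner_eH_Lp u (z j)]
        exact hgen j
      have hall : ∀ w : ℂ, pwTransformH h (⇑u) w = 0 := huniq (⇑u) (Lp.memLp u) hz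
      exact inj hh u hall
    rw [← Submodule.orthogonal_orthogonal_eq_closure, hbot, Submodule.bot_orthogonal_eq_top]
  -- convergence of norms
  have hnorm : Tendsto (fun n : ℕ => ‖FH - q n‖) atTop (nhds 0) := by
    rw [Metric.tendsto_atTop]
    intro ε hε
    have hFHmem : FH ∈ closure ((Submodule.span ℂ (Set.range (fun j : ℕ => eH h (z j)))) : Set (Lp ℂ 2 (mu h))) := by
      have := Submodule.mem_top (x := FH) (R := ℂ)
      rw [← hdense] at this
      exact this
    obtain ⟨v, hvmem, hvdist⟩ := Metric.mem_closure_iff.mp hFHmem ε hε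
    obtain ⟨c, hc⟩ := Finsupp.mem_span_range_iff_exists_finsupp.mp hvmem
    set N : ℕ := (c.support.sup id) + 1 with hN
    refine ⟨N, fun n hn => ?_⟩
    have hvspan : v ∈ Submodule.span ℂ (Set.range (fun k : Fin n => eH h (z k))) := by
      rw [← hc]
      rw [Finsupp.sum]
      refine Submodule.sum_mem _ fun i hi => ?_
      have hilt : i < n := by
        have : i ≤ c.support.sup id := Finset.le_sup (f := id) hi
        omega
      exact Submodule.smul_mem _ _
        (Submodule.subset_span ⟨⟨i, hilt⟩, rfl⟩)
    have hle := hbest n v hvspan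
    rw [Real.dist_eq, sub_zero, abs_of_nonneg (norm_nonneg _)]
    calc ‖FH - q n‖ ≤ ‖FH - v‖ := hle
      _ = dist FH v := (dist_eq_norm _ _).symm
      _ < ε := hvdist
  -- assemble
  have hfun : ∀ n : ℕ, (fun x : ℝ =>
      pwTransformH h F x - ∑ j : Fin n, ∑ k : Fin n,
        pwTransformH h F (z j) * (starRingEnd ℂ) ((A n)⁻¹ j k) *
          sincKernel h ((x : ℂ) - (starRingEnd ℂ) (z k)))
      = fun x : ℝ => ⟪eH h (x:ℂ), FH - q n⟫ := by
    intro n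
    funext x
    rw [inner_sub_right, happrox n x, hpw (x:ℂ)]
  have hub : ∀ n : ℕ, eLpNorm (fun x : ℝ =>
      pwTransformH h F x - ∑ j : Fin n, ∑ k : Fin n,
        pwTransformH h F (z j) * (starRingEnd ℂ) ((A n)⁻¹ j k) *
          sincKernel h ((x : ℂ) - (starRingEnd ℂ) (z k))) 2 volume
      ≤ ENNReal.ofReal ‖FH - q n‖ := by
    intro n
    rw [hfun n]
    exact eLpNorm_phi_le hh (FH - q n)
  have hupper : Tendsto (fun n : ℕ => ENNReal.ofReal ‖FH - q n‖) atTop (nhds 0) := by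
    have := ENNReal.tendsto_ofReal hnorm
    simpa using this
  exact tendsto_of_tendsto_of_tendsto_of_le_of_le tendsto_const_nhds hupper
    (fun n => zero_le) hub
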